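/- arXiv:2510.04809 — 2 statements merged into one kernel-verified Lean document; each statement's English description precedes it below -/
import Mathlib

section
/- Let f ∈ C²([a,1]) with f(a) = f(1) = 0, where e^{-π√2} < a < 1 and f not identically zero. Then 2∫ₐ¹ (f'(r))² r⁻¹ dr > 3∫ₐ¹ f(r)² r⁻³ dr. -/
open Real Set intervalIntegral Topology
open scoped ENNReal

/-- For e^{-π√2} < a < 1 and f C² on [a,1] vanishing at both endpoints and not
identically zero, one has 2∫ₐ¹ (f')² r⁻¹ dr > 3∫ₐ¹ f² r⁻³ dr. -/
theorem key_inequality (a : ℝ) (ha : Real.exp (-π * Real.sqrt 2) < a)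
    (ha1 : a < 1) (f : ℝ → ℝ) (hf : ContDiffOn ℝ 2 f (Icc a 1))
    (hfa : f a = 0) (hf1 : f 1 = 0) (hne : ∃ r ∈ Icc a 1, f r ≠ 0) :
    2 * ∫ r in a..1, (deriv f r) ^ 2 / r >
      3 * ∫ r in a..1, (f r) ^ 2 / r ^ 3 := by
  have ha0 : 0 < a := lt_trans (Real.exp_pos _) ha
  have hs2 : (0:ℝ) < Real.sqrt 2 := Real.sqrt_pos.mpr (by norm_num)
  have hs2' : Real.sqrt 2 ≠ 0 := ne_of_gt hs2
  have s2sq : Real.sqrt 2 * Real.sqrt 2 = 2 := Real.mul_self_sqrt (by norm_num)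
  have hla : -π * Real.sqrt 2 < Real.log a := (Real.lt_log_iff_exp_lt ha0).mpr ha
  have hla2 : -π < Real.log a / Real.sqrt 2 := by
    rw [lt_div_iff₀ hs2]; linarith
  set δ : ℝ := (π + Real.log a / Real.sqrt 2) / 2 with hδdef
  set p : ℝ → ℝ := fun r => (Real.log r - Real.log a) / Real.sqrt 2 + δ with hpdef
  have hppos : ∀ r ∈ Icc a 1, 0 < p r ∧ p r < π := by
    intro r hr
    have h1 : Real.log a ≤ Real.log r := Real.log_le_log ha0 hr.1
    have h2 : Real.log r ≤ 0 := Real.log_nonpos (le_of_lt (lt_of_lt_of_le ha0 hr.1)) hr.2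
    have h3 : 0 ≤ (Real.log r - Real.log a) / Real.sqrt 2 :=
      div_nonneg (by linarith) hs2.le
    have h4 : (Real.log r - Real.log a) / Real.sqrt 2
        ≤ (0 - Real.log a) / Real.sqrt 2 :=
      (div_le_div_iff_of_pos_right hs2).mpr (by linarith)
    have h5 : (0 - Real.log a) / Real.sqrt 2 = -(Real.log a / Real.sqrt 2) := by ring
    constructor
    · simp only [hpdef]; rw [hδdef]; linarith
    · simp only [hpdef]; rw [hδdef]; linarith [h5 ▸ h4]
  have hsin : ∀ r ∈ Icc a 1, 0 < Real.sin (p r) := fun r hr =>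
    Real.sin_pos_of_pos_of_lt_pi (hppos r hr).1 (hppos r hr).2
  set w : ℝ → ℝ := fun r => r * Real.sin (p r) with hwdef
  set W : ℝ → ℝ := fun r => Real.sin (p r) + Real.cos (p r) / Real.sqrt 2 with hWdef
  have hwpos : ∀ r ∈ Icc a 1, 0 < w r := fun r hr =>
    mul_pos (lt_of_lt_of_le ha0 hr.1) (hsin r hr)
  -- derivatives of p, w, W
  have hp' : ∀ r : ℝ, 0 < r → HasDerivAt p (r⁻¹ / Real.sqrt 2) r := by
    intro r hr
    exact (((Real.hasDerivAt_log (ne_of_gt hr)).sub_const (Real.log a)).div_const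
      (Real.sqrt 2)).add_const δ
  have hw' : ∀ r : ℝ, 0 < r → HasDerivAt w (W r) r := by
    intro r hr
    have h1 : HasDerivAt (fun x => Real.sin (p x)) (Real.cos (p r) * (r⁻¹ / Real.sqrt 2)) r :=
      (Real.hasDerivAt_sin (p r)).comp r (hp' r hr)
    have h2 := (hasDerivAt_id r).mul h1
    refine h2.congr_deriv (Eq.symm ?_)
    simp only [hWdef, id]
    field_simp
  have hW' : ∀ r : ℝ, 0 < r →
      HasDerivAt W (W r / r - (3/2) * w r / r^2) r := by
    intro r hr
    have h1 : HasDerivAt (fun x => Real.sin (p x)) (Real.cos (p r) * (r⁻¹ / Real.sqrt 2)) r :=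
      (Real.hasDerivAt_sin (p r)).comp r (hp' r hr)
    have h2 : HasDerivAt (fun x => Real.cos (p x)) (-Real.sin (p r) * (r⁻¹ / Real.sqrt 2)) r :=
      (Real.hasDerivAt_cos (p r)).comp r (hp' r hr)
    have h3 := h1.add (h2.div_const (Real.sqrt 2))
    refine h3.congr_deriv (Eq.symm ?_)
    simp only [hWdef, hwdef]
    have hrne : r ≠ 0 := ne_of_gt hr
    field_simp
    linear_combination (-Real.sin (p r)) * s2sq
  -- the ground state ratio B = w'/(w r) and its derivative Bd
  set B : ℝ → ℝ := fun r => W r / (w r * r) with hBdef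
  set Bd : ℝ → ℝ := fun r =>
    ((W r / r - (3/2) * w r / r^2) * (w r * r) - W r * (W r * r + w r * 1)) / (w r * r)^2
    with hBddef
  have hrpos : ∀ r ∈ Icc a 1, 0 < r := fun r hr => lt_of_lt_of_le ha0 hr.1
  have hwrne : ∀ r ∈ Icc a 1, w r * r ≠ 0 := fun r hr =>
    ne_of_gt (mul_pos (hwpos r hr) (hrpos r hr))
  have hB' : ∀ r ∈ Icc a 1, HasDerivAt B (Bd r) r := by
    intro r hr
    have h1 := (hW' r (hrpos r hr)).div
      ((hw' r (hrpos r hr)).mul (hasDerivAt_id r)) (hwrne r hr)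
    exact h1
  -- continuity facts
  have hIsub : Icc a 1 ⊆ {(0:ℝ)}ᶜ := by
    intro x hx; simp only [mem_compl_iff, mem_singleton_iff]
    exact ne_of_gt (hrpos x hx)
  have hpc : ContinuousOn p (Icc a 1) := by
    apply ContinuousOn.add _ continuousOn_const
    exact ((Real.continuousOn_log.mono hIsub).sub continuousOn_const).div_const _
  have hwc : ContinuousOn w (Icc a 1) :=
    continuousOn_id.mul (Real.continuous_sin.comp_continuousOn hpc)
  have hWc : ContinuousOn W (Icc a 1) :=
    (Real.continuous_sin.comp_continuousOn hpc).add
      ((Real.continuous_cos.comp_continuousOn hpc).div_const _)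
  have hBc : ContinuousOn B (Icc a 1) :=
    hWc.div (hwc.mul continuousOn_id) hwrne
  have hBdc : ContinuousOn Bd (Icc a 1) := by
    apply ContinuousOn.div
    · apply ContinuousOn.sub
      · exact ((hWc.div continuousOn_id (fun x hx => ne_of_gt (hrpos x hx))).sub
          ((ContinuousOn.mul continuousOn_const hwc).div (continuousOn_id.pow 2)
            (fun x hx => pow_ne_zero _ (ne_of_gt (hrpos x hx))))).mul (hwc.mul continuousOn_id)
      · exact hWc.mul ((hWc.mul continuousOn_id).add (hwc.mul continuousOn_const))
    · exact (hwc.mul continuousOn_id).pow 2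
    · intro x hx; exact pow_ne_zero _ (hwrne x hx)
  -- the within-derivative of f
  set f1 : ℝ → ℝ := derivWithin f (Icc a 1) with hf1def
  have hfc : ContinuousOn f (Icc a 1) := hf.continuousOn
  have hf1c : ContinuousOn f1 (Icc a 1) :=
    hf.continuousOn_derivWithin (uniqueDiffOn_Icc ha1) one_le_two
  have hfd : ∀ r ∈ Ioo a 1, HasDerivAt f (f1 r) r := by
    intro r hr
    have hmem : Icc a 1 ∈ 𝓝 r := Icc_mem_nhds hr.1 hr.2
    have hdiff : DifferentiableAt ℝ f r :=
      (hf.contDiffAt hmem).differentiableAt two_ne_zero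
    have heq : f1 r = deriv f r := by
      simp only [hf1def]; exact derivWithin_of_mem_nhds hmem
    rw [heq]; exact hdiff.hasDerivAt
  have hae1 : ∀ᵐ x : ℝ, x ≠ (1:ℝ) := by
    rw [MeasureTheory.ae_iff]
    simp [Real.volume_singleton]
  have haeIoo : ∀ F G : ℝ → ℝ, (∀ x ∈ Ioo a 1, F x = G x) →
      (∫ r in a..1, F r) = ∫ r in a..1, G r := by
    intro F G h
    apply intervalIntegral.integral_congr_ae
    filter_upwards [hae1] with x hx1 hxI
    rw [uIoc_of_le ha1.le] at hxI
    exact h x ⟨hxI.1, lt_of_le_of_ne hxI.2 hx1⟩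
  set g : ℝ → ℝ := fun r => f1 r - r * B r * f r with hgdef
  set D : ℝ → ℝ := fun r => Bd r * f r ^ 2 + B r * (2 * f r * f1 r) with hDdef
  have hBF' : ∀ r ∈ Ioo a 1, HasDerivAt (fun x => B x * f x ^ 2) (D r) r := by
    intro r hr
    have h1 := (hB' r (Ioo_subset_Icc_self hr)).mul ((hfd r hr).pow 2)
    refine h1.congr_deriv (Eq.symm ?_)
    simp only [hDdef, Pi.pow_apply]
    ring
  have hDc : ContinuousOn D (Icc a 1) :=
    (hBdc.mul (hfc.pow 2)).add (hBc.mul ((continuousOn_const.mul hfc).mul hf1c))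
  have hDint : IntervalIntegrable D MeasureTheory.volume a 1 :=
    hDc.intervalIntegrable_of_Icc ha1.le
  have hBFc : ContinuousOn (fun x => B x * f x ^ 2) (Icc a 1) := hBc.mul (hfc.pow 2)
  have hintD : (∫ r in a..1, D r) = 0 := by
    rw [intervalIntegral.integral_eq_sub_of_hasDeriv_right_of_le ha1.le hBFc
      (fun x hx => (hBF' x hx).hasDerivWithinAt) hDint]
    simp [hfa, hf1]
  have hpt : ∀ r ∈ Ioo a 1,
      f1 r ^ 2 / r - 3 / 2 * (f r ^ 2 / r ^ 3) = g r ^ 2 / r + D r := by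
    intro r hr
    have hrI : r ∈ Icc a 1 := Ioo_subset_Icc_self hr
    have hr0 : r ≠ 0 := ne_of_gt (hrpos r hrI)
    have hw0 : w r ≠ 0 := ne_of_gt (hwpos r hrI)
    simp only [hgdef, hDdef, hBdef, hBddef]
    field_simp
    ring
  have hint1 : IntervalIntegrable (fun r => f1 r ^ 2 / r) MeasureTheory.volume a 1 :=
    ((hf1c.pow 2).div continuousOn_id
      (fun x hx => ne_of_gt (hrpos x hx))).intervalIntegrable_of_Icc ha1.le
  have hint2 : IntervalIntegrable (fun r => f r ^ 2 / r ^ 3) MeasureTheory.volume a 1 :=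
    ((hfc.pow 2).div (continuousOn_id.pow 3)
      (fun x hx => pow_ne_zero _ (ne_of_gt (hrpos x hx)))).intervalIntegrable_of_Icc ha1.le
  have hgc : ContinuousOn g (Icc a 1) := hf1c.sub ((continuousOn_id.mul hBc).mul hfc)
  have hintg : IntervalIntegrable (fun r => g r ^ 2 / r) MeasureTheory.volume a 1 :=
    ((hgc.pow 2).div continuousOn_id
      (fun x hx => ne_of_gt (hrpos x hx))).intervalIntegrable_of_Icc ha1.le
  have key1 : (∫ r in a..1, (deriv f r) ^ 2 / r) = ∫ r in a..1, f1 r ^ 2 / r := by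
    apply haeIoo
    intro x hx
    have hmem : Icc a 1 ∈ 𝓝 x := Icc_mem_nhds hx.1 hx.2
    simp only [hf1def]
    rw [derivWithin_of_mem_nhds hmem]
  have key2 : (∫ r in a..1, f1 r ^ 2 / r) - 3 / 2 * ∫ r in a..1, f r ^ 2 / r ^ 3
      = ∫ r in a..1, g r ^ 2 / r := by
    have h1 : (∫ r in a..1, (f1 r ^ 2 / r - 3 / 2 * (f r ^ 2 / r ^ 3)))
        = (∫ r in a..1, f1 r ^ 2 / r) - 3 / 2 * ∫ r in a..1, f r ^ 2 / r ^ 3 := by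
      rw [intervalIntegral.integral_sub hint1 (hint2.const_mul _),
        intervalIntegral.integral_const_mul]
    have h2 : (∫ r in a..1, (g r ^ 2 / r + D r))
        = (∫ r in a..1, g r ^ 2 / r) + ∫ r in a..1, D r :=
      intervalIntegral.integral_add hintg hDint
    rw [← h1, haeIoo _ _ hpt, h2, hintD, add_zero]
  -- if g vanishes on (a,1) then f vanishes identically: contradiction
  have hfzero : ¬ ∀ r ∈ Ioo a 1, g r = 0 := by
    intro hg
    obtain ⟨r₁, hr₁, hfr₁⟩ := hne
    apply hfr₁
    rcases eq_or_lt_of_le hr₁.1 with h | h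
    · rw [← h]; exact hfa
    · set q : ℝ → ℝ := fun x => f x / w x with hqdef
      have hsub : Icc a r₁ ⊆ Icc a 1 := Icc_subset_Icc_right hr₁.2
      have hqc : ContinuousOn q (Icc a r₁) :=
        (hfc.mono hsub).div (hwc.mono hsub) (fun x hx => ne_of_gt (hwpos x (hsub hx)))
      have hq' : ∀ x ∈ Ioo a r₁, HasDerivWithinAt q 0 (Ioi x) x := by
        intro x hx
        have hxI : x ∈ Ioo a 1 := ⟨hx.1, lt_of_lt_of_le hx.2 hr₁.2⟩
        have hxIc : x ∈ Icc a 1 := Ioo_subset_Icc_self hxI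
        have hx0 : x ≠ 0 := ne_of_gt (hrpos x hxIc)
        have hwx : w x ≠ 0 := ne_of_gt (hwpos x hxIc)
        have hD := (hfd x hxI).div (hw' x (hrpos x hxIc)) hwx
        have hgx := hg x hxI
        simp only [hgdef, hBdef] at hgx
        have hnum : (f1 x * w x - f x * W x) / w x ^ 2 = 0 := by
          rw [div_eq_zero_iff]
          left
          field_simp at hgx
          have hmul : (f1 x * w x - f x * W x) * x = 0 := by linear_combination x * hgx
          exact (mul_eq_zero.mp hmul).resolve_right hx0
        rw [hnum] at hD
        exact hD.hasDerivWithinAt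
      have hz : (∫ x in a..r₁, (0:ℝ)) = q r₁ - q a :=
        intervalIntegral.integral_eq_sub_of_hasDeriv_right_of_le h.le hqc hq'
          intervalIntegrable_const
      rw [intervalIntegral.integral_zero] at hz
      have hqa : q a = 0 := by simp [hqdef, hfa]
      have hqr : q r₁ = 0 := by linarith [hz, hqa]
      have hwr₁ : w r₁ ≠ 0 := ne_of_gt (hwpos r₁ hr₁)
      simpa [hqdef, div_eq_zero_iff, hwr₁] using hqr
  have hgpos : 0 < ∫ r in a..1, g r ^ 2 / r := by
    push_neg at hfzero
    obtain ⟨r₀, hr₀, hgr₀⟩ := hfzero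
    have hr₀I : r₀ ∈ Icc a 1 := Ioo_subset_Icc_self hr₀
    have hGc : ContinuousAt (fun r => g r ^ 2 / r) r₀ := by
      have hco : ContinuousOn (fun r => g r ^ 2 / r) (Icc a 1) :=
        (hgc.pow 2).div continuousOn_id (fun x hx => ne_of_gt (hrpos x hx))
      exact hco.continuousAt (Icc_mem_nhds hr₀.1 hr₀.2)
    have hGpos : 0 < g r₀ ^ 2 / r₀ :=
      div_pos (pow_two_pos_of_ne_zero hgr₀) (hrpos r₀ hr₀I)
    have hev : ∀ᶠ x in 𝓝 r₀, 0 < g x ^ 2 / x :=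
      hGc.eventually (eventually_gt_nhds hGpos)
    obtain ⟨ε, hε, hball⟩ := Metric.eventually_nhds_iff.mp hev
    set c := max a (r₀ - ε) with hcdef
    set d := min 1 (r₀ + ε) with hddef
    have hcr : c < r₀ := max_lt hr₀.1 (by linarith)
    have hrd : r₀ < d := lt_min hr₀.2 (by linarith)
    have hnn : 0 ≤ᵐ[MeasureTheory.volume.restrict (Set.uIoc a 1)] fun r => g r ^ 2 / r := by
      rw [uIoc_of_le ha1.le, Filter.EventuallyLE, MeasureTheory.ae_restrict_iff' measurableSet_Ioc]
      filter_upwards with x hx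
      exact div_nonneg (sq_nonneg _) (le_of_lt (lt_trans ha0 hx.1))
    rw [intervalIntegral.integral_pos_iff_support_of_nonneg_ae' hnn hintg]
    refine ⟨ha1, ?_⟩
    have hsubset : Ioo c d ⊆ Function.support (fun r => g r ^ 2 / r) ∩ Ioc a 1 := by
      intro x hx
      have hxa : a < x := lt_of_le_of_lt (le_max_left _ _) hx.1
      have hx1 : x ≤ 1 := le_of_lt (lt_of_lt_of_le hx.2 (min_le_left _ _))
      have hdist : dist x r₀ < ε := by
        rw [Real.dist_eq, abs_lt]
        constructor
        · have := lt_of_le_of_lt (le_max_right a (r₀ - ε)) hx.1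
          linarith
        · have := lt_of_lt_of_le hx.2 (min_le_right 1 (r₀ + ε))
          linarith
      exact ⟨ne_of_gt (hball hdist), hxa, hx1⟩
    calc (0:ℝ≥0∞) < MeasureTheory.volume (Ioo c d) :=
          (MeasureTheory.Measure.measure_Ioo_pos _).mpr (lt_trans hcr hrd)
      _ ≤ _ := MeasureTheory.measure_mono hsubset
  linarith [key1, key2, hgpos]
end

section
/- For the Navier boundary condition matrix M(t) with rows (j_ℓ(t), i_ℓ(t)) and (t²j_ℓ''(t) + σ(N-1)t j_ℓ'(t), t²i_ℓ''(t) + σ(N-1)t i_ℓ'(t)), one has det M(t) = 2t² j_ℓ(t) i_ℓ(t) - t(N-1)(1-σ)(j_ℓ(t) i_{ℓ+1}(t) + j_{ℓ+1}(t) i_ℓ(t)) for t > 0. -/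
open Real

/-- The Bessel function of the first kind `J_ν`, for positive real argument,
via its series representation. -/
noncomputable def besselJ (ν x : ℝ) : ℝ :=
  ∑' k : ℕ, (-1) ^ k / ((k.factorial : ℝ) * Real.Gamma (ν + k + 1)) *
    (x / 2) ^ (2 * (k : ℝ) + ν)

/-- The modified Bessel function of the first kind `I_ν`, for positive real
argument, via its series representation. -/
noncomputable def besselI (ν x : ℝ) : ℝ :=
  ∑' k : ℕ, 1 / ((k.factorial : ℝ) * Real.Gamma (ν + k + 1)) *
    (x / 2) ^ (2 * (k : ℝ) + ν)

/-- The ultraspherical Bessel function `j_ℓ` in dimension `N`. -/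
noncomputable def usj (N : ℕ) (ℓ : ℕ) (x : ℝ) : ℝ :=
  x ^ (1 - (N : ℝ) / 2) * besselJ ((ℓ : ℝ) + (N : ℝ) / 2 - 1) x

/-- The modified ultraspherical Bessel function `i_ℓ` in dimension `N`. -/
noncomputable def usi (N : ℕ) (ℓ : ℕ) (x : ℝ) : ℝ :=
  x ^ (1 - (N : ℝ) / 2) * besselI ((ℓ : ℝ) + (N : ℝ) / 2 - 1) x


/-- Coefficients of the ultraspherical Bessel power series. -/
noncomputable def cc (N ℓ k : ℕ) : ℝ :=
  (2:ℝ) ^ (-(2*(k:ℝ) + (ℓ:ℝ) + (N:ℝ)/2 - 1)) /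
    ((k.factorial : ℝ) * Real.Gamma ((ℓ:ℝ) + (N:ℝ)/2 + (k:ℝ)))

lemma mu_pos (N ℓ : ℕ) (hN : 2 ≤ N) (k : ℕ) : 0 < (ℓ:ℝ) + (N:ℝ)/2 + (k:ℝ) := by
  have : (2:ℝ) ≤ (N:ℝ) := by exact_mod_cast hN
  have h0 : (0:ℝ) ≤ (ℓ:ℝ) := Nat.cast_nonneg _
  have h1 : (0:ℝ) ≤ (k:ℝ) := Nat.cast_nonneg _
  linarith

lemma gamma_pos (N ℓ : ℕ) (hN : 2 ≤ N) (k : ℕ) :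
    0 < Real.Gamma ((ℓ:ℝ) + (N:ℝ)/2 + (k:ℝ)) :=
  Real.Gamma_pos_of_pos (mu_pos N ℓ hN k)

lemma cc_pos (N ℓ : ℕ) (hN : 2 ≤ N) (k : ℕ) : 0 < cc N ℓ k := by
  apply div_pos (Real.rpow_pos_of_pos (by norm_num) _)
  exact mul_pos (by exact_mod_cast k.factorial_pos) (gamma_pos N ℓ hN k)

lemma cc_succ (N ℓ : ℕ) (hN : 2 ≤ N) (k : ℕ) :
    cc N ℓ (k+1) = cc N ℓ k / (4 * ((k:ℝ)+1) * ((ℓ:ℝ) + (N:ℝ)/2 + (k:ℝ))) := by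
  have hμ := mu_pos N ℓ hN k
  have hγ := gamma_pos N ℓ hN k
  unfold cc
  have h1 : ((ℓ:ℝ) + (N:ℝ)/2 + ((k+1:ℕ):ℝ)) = ((ℓ:ℝ) + (N:ℝ)/2 + (k:ℝ)) + 1 := by
    push_cast; ring
  rw [h1, Real.Gamma_add_one hμ.ne']
  have h2 : (-(2*((k+1:ℕ):ℝ) + (ℓ:ℝ) + (N:ℝ)/2 - 1)) =
      (-(2*(k:ℝ) + (ℓ:ℝ) + (N:ℝ)/2 - 1)) + (-2) := by push_cast; ring
  rw [h2, Real.rpow_add (by norm_num : (0:ℝ) < 2)]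
  have h3 : (2:ℝ) ^ (-2 : ℝ) = 1/4 := by
    rw [show (-2:ℝ) = ((-2:ℤ):ℝ) by norm_num, Real.rpow_intCast]
    norm_num
  rw [h3]
  have h4 : (((k+1).factorial : ℕ):ℝ) = ((k:ℝ)+1) * (k.factorial : ℝ) := by
    rw [Nat.factorial_succ]; push_cast; ring
  rw [h4]
  have hf : ((k.factorial : ℕ):ℝ) ≠ 0 := by exact_mod_cast k.factorial_ne_zero
  have e1 : Real.Gamma ((ℓ:ℝ) + (N:ℝ)/2 + (k:ℝ)) ≠ 0 := hγ.ne'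
  have e3 : ((ℓ:ℝ) + (N:ℝ)/2 + (k:ℝ)) ≠ 0 := hμ.ne'
  rw [div_div]
  rw [div_eq_div_iff (by positivity) (by positivity)]
  try ring
  try (field_simp; ring)
  try (left; trivial)

lemma cc_level (N ℓ : ℕ) (hN : 2 ≤ N) (k : ℕ) :
    cc N (ℓ+1) k = cc N ℓ k / (2 * ((ℓ:ℝ) + (N:ℝ)/2 + (k:ℝ))) := by
  have hμ := mu_pos N ℓ hN k
  have hγ := gamma_pos N ℓ hN k
  unfold cc
  have h1 : (((ℓ+1:ℕ):ℝ) + (N:ℝ)/2 + (k:ℝ)) = ((ℓ:ℝ) + (N:ℝ)/2 + (k:ℝ)) + 1 := by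
    push_cast; ring
  rw [h1, Real.Gamma_add_one hμ.ne']
  have h2 : (-(2*(k:ℝ) + ((ℓ+1:ℕ):ℝ) + (N:ℝ)/2 - 1)) =
      (-(2*(k:ℝ) + (ℓ:ℝ) + (N:ℝ)/2 - 1)) + (-1) := by push_cast; ring
  rw [h2, Real.rpow_add (by norm_num : (0:ℝ) < 2)]
  have h3 : (2:ℝ) ^ (-1 : ℝ) = 1/2 := by
    rw [show (-1:ℝ) = ((-1:ℤ):ℝ) by norm_num, Real.rpow_intCast]
    norm_num
  rw [h3]
  have hf : ((k.factorial : ℕ):ℝ) ≠ 0 := by exact_mod_cast k.factorial_ne_zero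
  have e1 : Real.Gamma ((ℓ:ℝ) + (N:ℝ)/2 + (k:ℝ)) ≠ 0 := hγ.ne'
  have e3 : ((ℓ:ℝ) + (N:ℝ)/2 + (k:ℝ)) ≠ 0 := hμ.ne'
  rw [div_div]
  rw [div_eq_div_iff (by positivity) (by positivity)]
  try ring
  try (field_simp; ring)
  try (left; trivial)

lemma cc_le (N ℓ : ℕ) (hN : 2 ≤ N) (k : ℕ) :
    cc N ℓ k ≤ (2:ℝ) ^ (1 - (ℓ:ℝ) - (N:ℝ)/2) /
      ((k.factorial : ℝ) * Real.Gamma ((ℓ:ℝ) + (N:ℝ)/2 + (k:ℝ))) := by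
  unfold cc
  have hden : (0:ℝ) < (k.factorial : ℝ) * Real.Gamma ((ℓ:ℝ) + (N:ℝ)/2 + (k:ℝ)) :=
    mul_pos (by exact_mod_cast k.factorial_pos) (gamma_pos N ℓ hN k)
  have hexp : (2:ℝ) ^ (-(2*(k:ℝ) + (ℓ:ℝ) + (N:ℝ)/2 - 1)) ≤ (2:ℝ) ^ (1 - (ℓ:ℝ) - (N:ℝ)/2) := by
    rw [Real.rpow_le_rpow_left_iff (by norm_num : (1:ℝ) < 2)]
    have : (0:ℝ) ≤ (k:ℝ) := Nat.cast_nonneg _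
    linarith
  exact (div_le_div_iff_of_pos_right hden).mpr hexp

lemma summable_aux (μ : ℝ) (hμ : 0 < μ) (R : ℝ) :
    Summable (fun k : ℕ => R ^ k / ((k.factorial : ℝ) * Real.Gamma (μ + (k:ℝ)))) := by
  apply summable_of_ratio_norm_eventually_le (r := 1/2) (by norm_num)
  filter_upwards [Filter.eventually_ge_atTop (⌈2*|R|⌉₊ + 1)] with k hk
  have hkR : 2*|R| ≤ (k:ℝ) := by
    calc 2*|R| ≤ (⌈2*|R|⌉₊ : ℝ) := Nat.le_ceil _
    _ ≤ (k:ℝ) := by exact_mod_cast le_trans (Nat.le_succ _) hk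
  have hk1 : (1:ℝ) ≤ (k:ℝ) := by
    have : 1 ≤ k := le_trans (Nat.le_add_left 1 _) hk
    exact_mod_cast this
  have hγ : 0 < Real.Gamma (μ + (k:ℝ)) := Real.Gamma_pos_of_pos (by positivity)
  have hμk : (0:ℝ) < μ + (k:ℝ) := by positivity
  have hf : (0:ℝ) < ((k.factorial:ℕ):ℝ) := by exact_mod_cast k.factorial_pos
  have hG : Real.Gamma (μ + ((k+1:ℕ):ℝ)) = (μ + (k:ℝ)) * Real.Gamma (μ + (k:ℝ)) := by
    rw [show (μ + ((k+1:ℕ):ℝ)) = (μ + (k:ℝ)) + 1 by push_cast; ring,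
      Real.Gamma_add_one hμk.ne']
  have hF : (((k+1).factorial : ℕ):ℝ) = ((k:ℝ)+1) * ((k.factorial:ℕ):ℝ) := by
    rw [Nat.factorial_succ]; push_cast; ring
  rw [Real.norm_eq_abs, Real.norm_eq_abs, hG, hF]
  have e1 : |R ^ (k+1) / (((k:ℝ)+1) * ((k.factorial:ℕ):ℝ) * ((μ + (k:ℝ)) * Real.Gamma (μ + (k:ℝ))))|
      = |R| ^ (k+1) / (((k:ℝ)+1) * ((k.factorial:ℕ):ℝ) * ((μ + (k:ℝ)) * Real.Gamma (μ + (k:ℝ)))) := by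
    rw [abs_div, abs_pow, abs_of_pos (by positivity : (0:ℝ) < ((k:ℝ)+1) * ((k.factorial:ℕ):ℝ) * ((μ + (k:ℝ)) * Real.Gamma (μ + (k:ℝ))))]
  have e2 : |R ^ k / (((k.factorial:ℕ):ℝ) * Real.Gamma (μ + (k:ℝ)))|
      = |R| ^ k / (((k.factorial:ℕ):ℝ) * Real.Gamma (μ + (k:ℝ))) := by
    rw [abs_div, abs_pow, abs_of_pos (by positivity : (0:ℝ) < ((k.factorial:ℕ):ℝ) * Real.Gamma (μ + (k:ℝ)))]
  have key : |R| ^ (k+1) / (((k:ℝ)+1) * ((k.factorial:ℕ):ℝ) * ((μ + (k:ℝ)) * Real.Gamma (μ + (k:ℝ))))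
      = (|R| / (((k:ℝ)+1) * (μ + (k:ℝ)))) * (|R| ^ k / (((k.factorial:ℕ):ℝ) * Real.Gamma (μ + (k:ℝ)))) := by
    rw [pow_succ]
    field_simp
  rw [e1, e2, key]
  have hfac : |R| / (((k:ℝ)+1) * (μ + (k:ℝ))) ≤ 1/2 := by
    rw [div_le_iff₀ (by positivity)]
    nlinarith [abs_nonneg R]
  have hpos : (0:ℝ) ≤ |R| ^ k / (((k.factorial:ℕ):ℝ) * Real.Gamma (μ + (k:ℝ))) := by positivity
  exact mul_le_mul_of_nonneg_right hfac hpos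

lemma summable_master (μ : ℝ) (hμ : 0 < μ) (C B : ℝ) (g : ℕ → ℝ)
    (hg : ∀ k, |g k| ≤ C * B ^ k / ((k.factorial : ℝ) * Real.Gamma (μ + (k:ℝ)))) :
    Summable g := by
  have hs : Summable (fun k : ℕ => C * B ^ k / ((k.factorial : ℝ) * Real.Gamma (μ + (k:ℝ)))) := by
    have := (summable_aux μ hμ B).mul_left C
    simpa [mul_div_assoc] using this
  exact Summable.of_norm_bounded hs (fun k => by rw [Real.norm_eq_abs]; exact hg k)

lemma lin_le (m k : ℕ) : 2*(k:ℝ) + (m:ℝ) ≤ ((m:ℝ)+2) * 2 ^ k := by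
  induction k with
  | zero => norm_num
  | succ n ih =>
    have h1 : (2:ℝ) ≤ ((m:ℝ)+2) * 2 ^ n := by
      have h2 : (1:ℝ) ≤ 2 ^ n := one_le_pow₀ (by norm_num)
      nlinarith [Nat.cast_nonneg (α := ℝ) m]
    push_cast
    calc 2*((n:ℝ)+1) + m = (2*(n:ℝ) + m) + 2 := by ring
      _ ≤ ((m:ℝ)+2) * 2 ^ n + ((m:ℝ)+2) * 2 ^ n := by nlinarith
      _ = ((m:ℝ)+2) * 2 ^ (n+1) := by rw [pow_succ]; ring

lemma summable_conc (N ℓ : ℕ) (hN : 2 ≤ N) (R : ℝ) (hR : 1 ≤ R) (x : ℝ) (hx : |x| ≤ R)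
    (P : ℕ → ℝ) (C : ℝ) (hP : ∀ k, |P k| ≤ C * 4 ^ k) (m : ℕ) (e : ℕ → ℕ)
    (he : ∀ k, e k ≤ 2*k + m) :
    Summable (fun k => P k * cc N ℓ k * x ^ e k) := by
  have hμ : (0:ℝ) < (ℓ:ℝ) + (N:ℝ)/2 := by simpa using mu_pos N ℓ hN 0
  have hC : (0:ℝ) ≤ C := by have h := (abs_nonneg (P 0)).trans (hP 0); simpa using h
  apply summable_master ((ℓ:ℝ)+(N:ℝ)/2) hμ
    (C * (2:ℝ)^(1-(ℓ:ℝ)-(N:ℝ)/2) * R^m) (R^2*4)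
  intro k
  have hγ := gamma_pos N ℓ hN k
  have hf : (0:ℝ) < ((k.factorial:ℕ):ℝ) := by exact_mod_cast k.factorial_pos
  have hR0 : (0:ℝ) ≤ R := le_trans zero_le_one hR
  have hxpow : |x| ^ (e k) ≤ R ^ (2*k+m) :=
    le_trans (pow_le_pow_left₀ (abs_nonneg x) hx _) (pow_le_pow_right₀ hR (he k))
  have hccpos := cc_pos N ℓ hN k
  have hdpos : (0:ℝ) < (2:ℝ)^(1-(ℓ:ℝ)-(N:ℝ)/2) /
      (((k.factorial:ℕ):ℝ) * Real.Gamma ((ℓ:ℝ) + (N:ℝ)/2 + (k:ℝ))) :=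
    div_pos (Real.rpow_pos_of_pos (by norm_num) _) (mul_pos hf hγ)
  calc |P k * cc N ℓ k * x ^ e k| = |P k| * cc N ℓ k * |x| ^ e k := by
        rw [abs_mul, abs_mul, abs_pow, abs_of_pos hccpos]
    _ ≤ (C * 4^k) * ((2:ℝ)^(1-(ℓ:ℝ)-(N:ℝ)/2) /
          (((k.factorial:ℕ):ℝ) * Real.Gamma ((ℓ:ℝ) + (N:ℝ)/2 + (k:ℝ)))) * R^(2*k+m) := by
        apply mul_le_mul ?_ hxpow (pow_nonneg (abs_nonneg x) _) ?_
        · exact mul_le_mul (hP k) (cc_le N ℓ hN k) hccpos.le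
            (mul_nonneg hC (by positivity))
        · exact mul_nonneg (mul_nonneg hC (by positivity)) hdpos.le
    _ = C * (2:ℝ)^(1-(ℓ:ℝ)-(N:ℝ)/2) * R^m * (R^2*4)^k /
          (((k.factorial:ℕ):ℝ) * Real.Gamma ((ℓ:ℝ) + (N:ℝ)/2 + (k:ℝ))) := by
        rw [pow_add, pow_mul, mul_pow]
        field_simp

lemma hasDerivAt_tsum_pow (γ : ℕ → ℝ) (e : ℕ → ℕ)
    (hA : ∀ R : ℝ, 1 ≤ R → Summable fun k => |γ k| * R ^ e k)
    (hB : ∀ R : ℝ, 1 ≤ R → Summable fun k => (e k : ℝ) * |γ k| * R ^ (e k - 1))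
    (x : ℝ) :
    HasDerivAt (fun y : ℝ => ∑' k, γ k * y ^ e k)
      (∑' k, (e k : ℝ) * γ k * x ^ (e k - 1)) x := by
  set R : ℝ := |x| + 1 with hRdef
  have hR1 : (1:ℝ) ≤ R := le_add_of_nonneg_left (abs_nonneg x)
  have hR0 : (0:ℝ) < R := lt_of_lt_of_le one_pos hR1
  apply hasDerivAt_tsum_of_isPreconnected (hB R hR1)
    (Metric.isOpen_ball (x := (0:ℝ)) (ε := R))
    ((convex_ball (0:ℝ) R).isPreconnected)
    (g := fun k z => γ k * z ^ e k)
    (g' := fun k y => (e k : ℝ) * γ k * y ^ (e k - 1))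
    (y₀ := 0) ?_ ?_ ?_ ?_ ?_
  · intro k y _
    have h := (hasDerivAt_pow (e k) y).const_mul (γ k)
    exact h.congr_deriv (by ring)
  · intro k y hy
    have hyR : |y| ≤ R := by
      rw [Metric.mem_ball, Real.dist_eq, sub_zero] at hy
      exact hy.le
    rw [Real.norm_eq_abs, abs_mul, abs_mul, abs_pow, Nat.abs_cast]
    apply mul_le_mul_of_nonneg_left (pow_le_pow_left₀ (abs_nonneg y) hyR _)
    positivity
  · simpa [Metric.mem_ball] using hR0
  · apply Summable.of_norm_bounded (hA R hR1)
    intro k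
    rw [Real.norm_eq_abs, abs_mul, abs_pow]
    apply mul_le_mul_of_nonneg_left ?_ (abs_nonneg _)
    calc |(0:ℝ)| ^ e k ≤ 1 ^ e k := by
          apply pow_le_pow_left₀ (abs_nonneg _)
          simp
      _ ≤ R ^ e k := pow_le_pow_left₀ zero_le_one hR1 _
  · rw [Metric.mem_ball, Real.dist_eq, sub_zero, hRdef]
    exact lt_add_one |x|

lemma q_le2 (m k j : ℕ) (hj : j ≤ 2*k+m) : ((j:ℕ):ℝ) ≤ ((m:ℝ)+2) * 2 ^ k := by
  refine le_trans ?_ (lin_le m k)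
  exact_mod_cast hj

lemma two_le_four (k : ℕ) : ((2:ℝ))^k ≤ 4^k := pow_le_pow_left₀ (by norm_num) (by norm_num) k

lemma summable_shape (N ℓ : ℕ) (hN : 2 ≤ N) (ε : ℝ) (hε : |ε| ≤ 1) (R x : ℝ) (hR : 1 ≤ R)
    (hx : |x| ≤ R) (q : ℕ → ℝ) (C : ℝ) (hq : ∀ k, |q k| ≤ C * 4 ^ k) (m : ℕ) (e : ℕ → ℕ)
    (he : ∀ k, e k ≤ 2*k+m) (g : ℕ → ℝ)
    (hg : ∀ k, g k = q k * ε ^ k * cc N ℓ k * x ^ e k) : Summable g := by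
  apply Summable.congr (f := fun k => (q k * ε ^ k) * cc N ℓ k * x ^ e k) ?_ (fun k => (hg k).symm)
  apply summable_conc N ℓ hN R hR x hx _ C ?_ m e he
  intro k
  rw [abs_mul, abs_pow]
  have h1 : |ε| ^ k ≤ 1 := pow_le_one₀ (abs_nonneg ε) hε
  have h2 : (0:ℝ) ≤ C * 4 ^ k := le_trans (abs_nonneg _) (hq k)
  calc |q k| * |ε| ^ k ≤ (C * 4 ^ k) * 1 :=
        mul_le_mul (hq k) h1 (pow_nonneg (abs_nonneg ε) k) h2
    _ = C * 4 ^ k := mul_one _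

noncomputable def FF (N : ℕ) (ε : ℝ) (ℓ : ℕ) (x : ℝ) : ℝ :=
  ∑' k, ε ^ k * cc N ℓ k * x ^ (2*k+ℓ)

noncomputable def FF1 (N : ℕ) (ε : ℝ) (ℓ : ℕ) (x : ℝ) : ℝ :=
  ∑' k, ((2*k+ℓ : ℕ) : ℝ) * (ε ^ k * cc N ℓ k) * x ^ (2*k+ℓ-1)

noncomputable def FF2 (N : ℕ) (ε : ℝ) (ℓ : ℕ) (x : ℝ) : ℝ :=
  ∑' k, ((2*k+ℓ-1 : ℕ) : ℝ) * (((2*k+ℓ : ℕ) : ℝ) * (ε ^ k * cc N ℓ k)) * x ^ (2*k+ℓ-1-1)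

lemma hasDerivAt_FF (N ℓ : ℕ) (hN : 2 ≤ N) (ε : ℝ) (hε : |ε| ≤ 1) (x : ℝ) :
    HasDerivAt (FF N ε ℓ) (FF1 N ε ℓ x) x := by
  have habs : ∀ k, |ε ^ k * cc N ℓ k| = |ε| ^ k * cc N ℓ k := by
    intro k; rw [abs_mul, abs_pow, abs_of_pos (cc_pos N ℓ hN k)]
  have hεa : |(|ε|)| ≤ 1 := by rwa [abs_abs]
  have h := hasDerivAt_tsum_pow (fun k => ε ^ k * cc N ℓ k) (fun k => 2*k+ℓ)
    (fun R hR => by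
      apply summable_shape N ℓ hN |ε| hεa R R hR (le_of_eq (abs_of_nonneg (by linarith)))
        (fun _ => 1) 1 (fun k => by
          simpa using one_le_pow₀ (show (1:ℝ) ≤ 4 by norm_num) (n := k))
        ℓ (fun k => 2*k+ℓ) (fun k => le_refl _)
      intro k
      rw [habs k]; ring)
    (fun R hR => by
      apply summable_shape N ℓ hN |ε| hεa R R hR (le_of_eq (abs_of_nonneg (by linarith)))
        (fun k => ((2*k+ℓ : ℕ) : ℝ)) (((ℓ:ℝ))+2) (fun k => by
          rw [Nat.abs_cast]
          refine (q_le2 ℓ k _ (le_refl _)).trans ?_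
          have := two_le_four k
          have h0 : (0:ℝ) ≤ (ℓ:ℝ)+2 := by positivity
          nlinarith)
        ℓ (fun k => 2*k+ℓ-1) (fun k => Nat.sub_le _ _)
      intro k
      rw [habs k]; ring) x
  exact h

lemma hasDerivAt_FF1 (N ℓ : ℕ) (hN : 2 ≤ N) (ε : ℝ) (hε : |ε| ≤ 1) (x : ℝ) :
    HasDerivAt (FF1 N ε ℓ) (FF2 N ε ℓ x) x := by
  have habs : ∀ k, |ε ^ k * cc N ℓ k| = |ε| ^ k * cc N ℓ k := by
    intro k; rw [abs_mul, abs_pow, abs_of_pos (cc_pos N ℓ hN k)]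
  have hεa : |(|ε|)| ≤ 1 := by rwa [abs_abs]
  have hql : ∀ k, |((2*k+ℓ : ℕ) : ℝ)| ≤ ((ℓ:ℝ)+2) * 4 ^ k := by
    intro k
    rw [Nat.abs_cast]
    refine (q_le2 ℓ k _ (le_refl _)).trans ?_
    have := two_le_four k
    have h0 : (0:ℝ) ≤ (ℓ:ℝ)+2 := by positivity
    nlinarith
  have h := hasDerivAt_tsum_pow (fun k => ((2*k+ℓ : ℕ) : ℝ) * (ε ^ k * cc N ℓ k))
    (fun k => 2*k+ℓ-1)
    (fun R hR => by
      apply summable_shape N ℓ hN |ε| hεa R R hR (le_of_eq (abs_of_nonneg (by linarith)))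
        (fun k => ((2*k+ℓ : ℕ) : ℝ)) (((ℓ:ℝ))+2) hql ℓ (fun k => 2*k+ℓ-1) (fun k => Nat.sub_le _ _)
      intro k
      rw [abs_mul, habs k, Nat.abs_cast]; ring)
    (fun R hR => by
      apply summable_shape N ℓ hN |ε| hεa R R hR (le_of_eq (abs_of_nonneg (by linarith)))
        (fun k => ((2*k+ℓ-1 : ℕ) : ℝ) * ((2*k+ℓ : ℕ) : ℝ)) ((((ℓ:ℝ))+2)*(((ℓ:ℝ))+2))
        (fun k => by
          rw [abs_mul, Nat.abs_cast, Nat.abs_cast]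
          have h1 : ((2*k+ℓ-1 : ℕ) : ℝ) ≤ ((ℓ:ℝ)+2) * 2 ^ k := q_le2 ℓ k _ (by omega)
          have h2 : ((2*k+ℓ : ℕ) : ℝ) ≤ ((ℓ:ℝ)+2) * 2 ^ k := q_le2 ℓ k _ (le_refl _)
          have h4 : ((2:ℝ)^k) * (2^k) = 4^k := by rw [← mul_pow]; norm_num
          have hn1 : (0:ℝ) ≤ ((2*k+ℓ : ℕ) : ℝ) := Nat.cast_nonneg _
          have hn0 : (0:ℝ) ≤ ((2*k+ℓ-1 : ℕ) : ℝ) := Nat.cast_nonneg _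
          calc ((2*k+ℓ-1 : ℕ) : ℝ) * ((2*k+ℓ : ℕ) : ℝ)
              ≤ (((ℓ:ℝ)+2) * 2 ^ k) * (((ℓ:ℝ)+2) * 2 ^ k) :=
                mul_le_mul h1 h2 hn1 (by positivity)
            _ = (((ℓ:ℝ)+2)*((ℓ:ℝ)+2)) * 4 ^ k := by rw [← h4]; ring)
        ℓ (fun k => 2*k+ℓ-1-1) (fun k => (Nat.sub_le _ _).trans (Nat.sub_le _ _))
      intro k
      rw [abs_mul, habs k, Nat.abs_cast]; ring) x
  exact h

lemma q_const4 (c C : ℝ) (h : |c| ≤ C) (k : ℕ) : |c| ≤ C * 4 ^ k :=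
  h.trans (le_mul_of_one_le_right ((abs_nonneg c).trans h)
    (one_le_pow₀ (by norm_num : (1:ℝ) ≤ 4)))

lemma FF1_eq (N ℓ : ℕ) (hN : 2 ≤ N) (ε : ℝ) (hε : |ε| ≤ 1) (x : ℝ) (hx : 0 < x) :
    FF1 N ε ℓ x = (ℓ:ℝ)/x * FF N ε ℓ x + ε * FF N ε (ℓ+1) x := by
  have hR : (1:ℝ) ≤ x + 1 := by linarith
  have habsx : |x| ≤ x + 1 := by rw [abs_of_pos hx]; linarith
  have hql : ∀ k : ℕ, |2*(k:ℝ)| ≤ ((ℓ:ℝ)+2) * 4 ^ k := by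
    intro k
    rw [abs_of_nonneg (by positivity)]
    have hle := lin_le ℓ k
    have h00 : (0:ℝ) ≤ (ℓ:ℝ) := Nat.cast_nonneg _
    have h24 := two_le_four k
    have h0 : (0:ℝ) ≤ (ℓ:ℝ)+2 := by positivity
    nlinarith
  have hSa : Summable (fun k : ℕ => (ℓ:ℝ) * ε^k * cc N ℓ k * x^(2*k+ℓ-1)) := by
    apply summable_shape N ℓ hN ε hε (x+1) x hR habsx (fun _ => (ℓ:ℝ)) ((ℓ:ℝ)+2)
      (fun k => by
        show |(ℓ:ℝ)| ≤ ((ℓ:ℝ)+2) * 4 ^ k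
        exact q_const4 _ _ (by rw [Nat.abs_cast]; linarith) k) ℓ
      (fun k => 2*k+ℓ-1) (fun k => Nat.sub_le _ _)
    intro k; rfl
  have hSb : Summable (fun k : ℕ => 2*(k:ℝ) * ε^k * cc N ℓ k * x^(2*k+ℓ-1)) := by
    apply summable_shape N ℓ hN ε hε (x+1) x hR habsx (fun k : ℕ => 2*(k:ℝ)) ((ℓ:ℝ)+2)
      hql ℓ (fun k => 2*k+ℓ-1) (fun k => Nat.sub_le _ _)
    intro k; rfl
  have step1 : FF1 N ε ℓ x = ∑' (k : ℕ), ((ℓ:ℝ) * ε^k * cc N ℓ k * x^(2*k+ℓ-1)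
      + 2*(k:ℝ) * ε^k * cc N ℓ k * x^(2*k+ℓ-1)) := by
    unfold FF1
    exact tsum_congr (fun k => by push_cast; ring)
  rw [step1, Summable.tsum_add hSa hSb]
  congr 1
  · have heq : (fun k : ℕ => (ℓ:ℝ) * ε^k * cc N ℓ k * x^(2*k+ℓ-1))
        = (fun k : ℕ => ((ℓ:ℝ)/x) * (ε^k * cc N ℓ k * x^(2*k+ℓ))) := by
      funext k
      cases ℓ with
      | zero => simp
      | succ m =>
        have he : 2*k+(m+1)-1 = 2*k+m := by omega
        have he2 : 2*k+(m+1) = (2*k+m)+1 := by omega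
        rw [he, he2, pow_succ]
        field_simp
    rw [heq, tsum_mul_left]
    rfl
  · have h0 : 2*((0:ℕ):ℝ) * ε^0 * cc N ℓ 0 * x^(2*0+ℓ-1) = 0 := by norm_num
    rw [Summable.tsum_eq_zero_add hSb, h0, zero_add]
    have heq : (fun k : ℕ => 2*(((k+1:ℕ)):ℝ) * ε^(k+1) * cc N ℓ (k+1) * x^(2*(k+1)+ℓ-1))
        = (fun k : ℕ => ε * (ε^k * cc N (ℓ+1) k * x^(2*k+(ℓ+1)))) := by
      funext k
      have he : 2*(k+1)+ℓ-1 = 2*k+(ℓ+1) := by omega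
      rw [he, cc_succ N ℓ hN k, cc_level N ℓ hN k, pow_succ]
      have hD := mu_pos N ℓ hN k
      have hk1 : ((k:ℝ)+1) ≠ 0 := by positivity
      push_cast
      field_simp
      ring
    rw [heq, tsum_mul_left]
    rfl

set_option maxHeartbeats 1000000 in
lemma FF2_eq (N ℓ : ℕ) (hN : 2 ≤ N) (ε : ℝ) (hε : |ε| ≤ 1) (x : ℝ) (hx : 0 < x) :
    x^2 * FF2 N ε ℓ x = -(ε*((N:ℝ)-1)) * x * FF N ε (ℓ+1) x
      + ((ℓ:ℝ)^2 - (ℓ:ℝ) + ε*x^2) * FF N ε ℓ x := by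
  have hR : (1:ℝ) ≤ x + 1 := by linarith
  have habsx : |x| ≤ x + 1 := by rw [abs_of_pos hx]; linarith
  have hql2 : ∀ k : ℕ, |((2*k+ℓ-1 : ℕ):ℝ) * ((2*k+ℓ : ℕ):ℝ)| ≤ (((ℓ:ℝ)+2)*((ℓ:ℝ)+2)) * 4 ^ k := by
    intro k
    rw [abs_mul, Nat.abs_cast, Nat.abs_cast]
    have h1 : ((2*k+ℓ-1 : ℕ) : ℝ) ≤ ((ℓ:ℝ)+2) * 2 ^ k := q_le2 ℓ k _ (by omega)
    have h2 : ((2*k+ℓ : ℕ) : ℝ) ≤ ((ℓ:ℝ)+2) * 2 ^ k := q_le2 ℓ k _ (le_refl _)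
    have h4 : ((2:ℝ)^k) * (2^k) = 4^k := by rw [← mul_pow]; norm_num
    calc ((2*k+ℓ-1 : ℕ) : ℝ) * ((2*k+ℓ : ℕ) : ℝ)
        ≤ (((ℓ:ℝ)+2) * 2 ^ k) * (((ℓ:ℝ)+2) * 2 ^ k) :=
          mul_le_mul h1 h2 (Nat.cast_nonneg _) (by positivity)
      _ = (((ℓ:ℝ)+2)*((ℓ:ℝ)+2)) * 4 ^ k := by rw [← h4]; ring
  have hL : Summable (fun k : ℕ =>
      ((2*k+ℓ-1 : ℕ):ℝ) * ((2*k+ℓ : ℕ):ℝ) * ε^k * cc N ℓ k * x^(2*k+ℓ)) := by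
    apply summable_shape N ℓ hN ε hε (x+1) x hR habsx
      (fun k : ℕ => ((2*k+ℓ-1 : ℕ):ℝ) * ((2*k+ℓ : ℕ):ℝ)) (((ℓ:ℝ)+2)*((ℓ:ℝ)+2)) hql2 ℓ
      (fun k => 2*k+ℓ) (fun k => le_refl _)
    intro k; ring
  have hB : Summable (fun k : ℕ => ((ℓ:ℝ)^2-(ℓ:ℝ)) * ε^k * cc N ℓ k * x^(2*k+ℓ)) := by
    apply summable_shape N ℓ hN ε hε (x+1) x hR habsx
      (fun _ => (ℓ:ℝ)^2-(ℓ:ℝ)) (((ℓ:ℝ)+2)*((ℓ:ℝ)+2))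
      (fun k => by
        show |(ℓ:ℝ)^2-(ℓ:ℝ)| ≤ (((ℓ:ℝ)+2)*((ℓ:ℝ)+2)) * 4 ^ k
        have h0 : (0:ℝ) ≤ (ℓ:ℝ) := Nat.cast_nonneg _
        have h00 : (1:ℝ) ≤ (ℓ:ℝ) ∨ (ℓ:ℝ) = 0 := by
          rcases Nat.eq_zero_or_pos ℓ with h | h
          · right; exact_mod_cast h
          · left; exact_mod_cast h
        apply q_const4
        rcases h00 with h | h
        · rw [abs_of_nonneg (by nlinarith)]; nlinarith
        · rw [h]; norm_num) ℓ (fun k => 2*k+ℓ) (fun k => le_refl _)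
    intro k; rfl
  have hCq : Summable (fun k : ℕ => ε * ε^k * cc N ℓ k * x^(2*k+ℓ+2)) := by
    apply summable_shape N ℓ hN ε hε (x+1) x hR habsx
      (fun _ => ε) 1 (fun k => by
        show |ε| ≤ 1 * 4 ^ k
        exact q_const4 _ _ hε k) (ℓ+2)
      (fun k => 2*k+ℓ+2) (fun k => by show 2*k+ℓ+2 ≤ 2*k+(ℓ+2); omega)
    intro k; rfl
  have hA : Summable (fun k : ℕ => (ε*((N:ℝ)-1)) * ε^k * cc N (ℓ+1) k * x^(2*k+ℓ+2)) := by
    apply summable_shape N (ℓ+1) hN ε hε (x+1) x hR habsx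
      (fun _ => ε*((N:ℝ)-1)) (N:ℝ) (fun k => by
        show |ε*((N:ℝ)-1)| ≤ (N:ℝ) * 4 ^ k
        apply q_const4
        have h1 : (2:ℝ) ≤ (N:ℝ) := by exact_mod_cast hN
        rw [abs_mul]
        calc |ε| * |(N:ℝ)-1| ≤ 1 * ((N:ℝ)-1) := by
              apply mul_le_mul hε (by rw [abs_of_nonneg (by linarith)]) (abs_nonneg _) zero_le_one
          _ ≤ (N:ℝ) := by linarith) (ℓ+2)
      (fun k => 2*k+ℓ+2) (fun k => by show 2*k+ℓ+2 ≤ 2*k+(ℓ+2); omega)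
    intro k; rfl
  have hBs : Summable (fun k : ℕ => ((ℓ:ℝ)^2-(ℓ:ℝ)) * ε^(k+1) * cc N ℓ (k+1) * x^(2*(k+1)+ℓ)) :=
    (summable_nat_add_iff 1).mpr hB
  have hCA : Summable (fun k : ℕ => ε * ε^k * cc N ℓ k * x^(2*k+ℓ+2)
      - (ε*((N:ℝ)-1)) * ε^k * cc N (ℓ+1) k * x^(2*k+ℓ+2)) := hCq.sub hA
  have key : ∀ k : ℕ, ((2*(k+1)+ℓ-1 : ℕ):ℝ) * ((2*(k+1)+ℓ : ℕ):ℝ) * ε^(k+1) * cc N ℓ (k+1) * x^(2*(k+1)+ℓ)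
      = ((ℓ:ℝ)^2-(ℓ:ℝ)) * ε^(k+1) * cc N ℓ (k+1) * x^(2*(k+1)+ℓ)
        + (ε * ε^k * cc N ℓ k * x^(2*k+ℓ+2)
          - (ε*((N:ℝ)-1)) * ε^k * cc N (ℓ+1) k * x^(2*k+ℓ+2)) := by
    intro k
    have h1 : 2*(k+1)+ℓ-1 = 2*k+ℓ+1 := by omega
    have h2 : 2*(k+1)+ℓ = 2*k+ℓ+2 := by omega
    rw [h1, h2, cc_succ N ℓ hN k, cc_level N ℓ hN k, pow_succ]
    have hD := mu_pos N ℓ hN k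
    have hk1 : ((k:ℝ)+1) ≠ 0 := by positivity
    push_cast
    field_simp
    ring
  have lhs_eq : x^2 * FF2 N ε ℓ x
      = ∑' (k : ℕ), ((2*k+ℓ-1 : ℕ):ℝ) * ((2*k+ℓ : ℕ):ℝ) * ε^k * cc N ℓ k * x^(2*k+ℓ) := by
    unfold FF2
    rw [← tsum_mul_left]
    apply tsum_congr
    intro k
    rcases Nat.lt_or_ge (2*k+ℓ) 2 with h | h
    · have h1 : (2*k+ℓ-1 : ℕ) = 0 := by omega
      rw [h1]
      push_cast
      ring
    · obtain ⟨j, hj⟩ : ∃ j, 2*k+ℓ = j+2 := ⟨2*k+ℓ-2, by omega⟩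
      rw [hj]
      have h1 : (j+2-1-1 : ℕ) = j := by omega
      have h2 : (j+2-1 : ℕ) = j+1 := by omega
      rw [h1, h2, pow_add]
      ring
  have L00 : ((2*0+ℓ-1 : ℕ):ℝ) * ((2*0+ℓ : ℕ):ℝ) * ε^0 * cc N ℓ 0 * x^(2*0+ℓ)
      = ((ℓ:ℝ)^2-(ℓ:ℝ)) * ε^0 * cc N ℓ 0 * x^(2*0+ℓ) := by
    cases ℓ with
    | zero => norm_num
    | succ m =>
      have h1 : (2*0+(m+1)-1 : ℕ) = m := by omega
      have h2 : (2*0+(m+1) : ℕ) = m+1 := by omega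
      rw [h1, h2]
      push_cast
      ring
  rw [lhs_eq, Summable.tsum_eq_zero_add hL, L00, tsum_congr key, Summable.tsum_add hBs hCA,
    Summable.tsum_sub hCq hA, ← add_assoc, ← Summable.tsum_eq_zero_add hB]
  have eB : (∑' (k : ℕ), ((ℓ:ℝ)^2-(ℓ:ℝ)) * ε^k * cc N ℓ k * x^(2*k+ℓ))
      = ((ℓ:ℝ)^2-(ℓ:ℝ)) * FF N ε ℓ x := by
    unfold FF
    rw [← tsum_mul_left]
    exact tsum_congr (fun k => by ring)
  have eC : (∑' (k : ℕ), ε * ε^k * cc N ℓ k * x^(2*k+ℓ+2)) = (ε * x^2) * FF N ε ℓ x := by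
    unfold FF
    rw [← tsum_mul_left]
    exact tsum_congr (fun k => by rw [pow_add]; ring)
  have eA : (∑' (k : ℕ), (ε*((N:ℝ)-1)) * ε^k * cc N (ℓ+1) k * x^(2*k+ℓ+2))
      = (ε*((N:ℝ)-1)*x) * FF N ε (ℓ+1) x := by
    unfold FF
    rw [← tsum_mul_left]
    apply tsum_congr
    intro k
    rw [show 2*k+(ℓ+1) = 2*k+ℓ+1 by omega, show (2*k+ℓ+2) = (2*k+ℓ+1)+1 by omega, pow_succ]
    ring
  rw [eB, eC, eA]
  ring

lemma usj_eqF (N ℓ : ℕ) (x : ℝ) (hx : 0 < x) : usj N ℓ x = FF N (-1) ℓ x := by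
  unfold usj besselJ FF cc
  rw [← tsum_mul_left]
  apply tsum_congr
  intro k
  have hν : ((ℓ:ℝ) + (N:ℝ)/2 - 1) + (k:ℝ) + 1 = (ℓ:ℝ) + (N:ℝ)/2 + (k:ℝ) := by ring
  rw [hν]
  have hdr : (x/2) ^ (2*(k:ℝ) + ((ℓ:ℝ) + (N:ℝ)/2 - 1))
      = x ^ (2*(k:ℝ) + ((ℓ:ℝ) + (N:ℝ)/2 - 1)) * (2:ℝ) ^ (-(2*(k:ℝ) + (ℓ:ℝ) + (N:ℝ)/2 - 1)) := by
    rw [Real.div_rpow hx.le (by norm_num : (0:ℝ) ≤ 2), div_eq_mul_inv,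
      ← Real.rpow_neg (by norm_num : (0:ℝ) ≤ 2)]
    congr 1
    ring
  rw [hdr]
  have hxx : x ^ ((1:ℝ) - (N:ℝ)/2) * x ^ (2*(k:ℝ) + ((ℓ:ℝ) + (N:ℝ)/2 - 1)) = x ^ (2*k+ℓ : ℕ) := by
    rw [← Real.rpow_add hx, ← Real.rpow_natCast x (2*k+ℓ)]
    congr 1
    push_cast
    ring
  calc x ^ ((1:ℝ) - (N:ℝ)/2) * ((-1)^k / ((k.factorial:ℝ) * Real.Gamma ((ℓ:ℝ) + (N:ℝ)/2 + (k:ℝ)))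
        * (x ^ (2*(k:ℝ) + ((ℓ:ℝ) + (N:ℝ)/2 - 1)) * (2:ℝ) ^ (-(2*(k:ℝ) + (ℓ:ℝ) + (N:ℝ)/2 - 1))))
      = ((-1)^k / ((k.factorial:ℝ) * Real.Gamma ((ℓ:ℝ) + (N:ℝ)/2 + (k:ℝ)))
          * (2:ℝ) ^ (-(2*(k:ℝ) + (ℓ:ℝ) + (N:ℝ)/2 - 1)))
        * (x ^ ((1:ℝ) - (N:ℝ)/2) * x ^ (2*(k:ℝ) + ((ℓ:ℝ) + (N:ℝ)/2 - 1))) := by ring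
    _ = (-1)^k * ((2:ℝ) ^ (-(2*(k:ℝ) + (ℓ:ℝ) + (N:ℝ)/2 - 1)) /
          ((k.factorial:ℝ) * Real.Gamma ((ℓ:ℝ) + (N:ℝ)/2 + (k:ℝ)))) * x ^ (2*k+ℓ : ℕ) := by
        rw [hxx]; ring

lemma usi_eqF (N ℓ : ℕ) (x : ℝ) (hx : 0 < x) : usi N ℓ x = FF N 1 ℓ x := by
  unfold usi besselI FF cc
  rw [← tsum_mul_left]
  apply tsum_congr
  intro k
  have hν : ((ℓ:ℝ) + (N:ℝ)/2 - 1) + (k:ℝ) + 1 = (ℓ:ℝ) + (N:ℝ)/2 + (k:ℝ) := by ring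
  rw [hν]
  have hdr : (x/2) ^ (2*(k:ℝ) + ((ℓ:ℝ) + (N:ℝ)/2 - 1))
      = x ^ (2*(k:ℝ) + ((ℓ:ℝ) + (N:ℝ)/2 - 1)) * (2:ℝ) ^ (-(2*(k:ℝ) + (ℓ:ℝ) + (N:ℝ)/2 - 1)) := by
    rw [Real.div_rpow hx.le (by norm_num : (0:ℝ) ≤ 2), div_eq_mul_inv,
      ← Real.rpow_neg (by norm_num : (0:ℝ) ≤ 2)]
    congr 1
    ring
  rw [hdr]
  have hxx : x ^ ((1:ℝ) - (N:ℝ)/2) * x ^ (2*(k:ℝ) + ((ℓ:ℝ) + (N:ℝ)/2 - 1)) = x ^ (2*k+ℓ : ℕ) := by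
    rw [← Real.rpow_add hx, ← Real.rpow_natCast x (2*k+ℓ)]
    congr 1
    push_cast
    ring
  calc x ^ ((1:ℝ) - (N:ℝ)/2) * (1 / ((k.factorial:ℝ) * Real.Gamma ((ℓ:ℝ) + (N:ℝ)/2 + (k:ℝ)))
        * (x ^ (2*(k:ℝ) + ((ℓ:ℝ) + (N:ℝ)/2 - 1)) * (2:ℝ) ^ (-(2*(k:ℝ) + (ℓ:ℝ) + (N:ℝ)/2 - 1))))
      = (1 / ((k.factorial:ℝ) * Real.Gamma ((ℓ:ℝ) + (N:ℝ)/2 + (k:ℝ)))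
          * (2:ℝ) ^ (-(2*(k:ℝ) + (ℓ:ℝ) + (N:ℝ)/2 - 1)))
        * (x ^ ((1:ℝ) - (N:ℝ)/2) * x ^ (2*(k:ℝ) + ((ℓ:ℝ) + (N:ℝ)/2 - 1))) := by ring
    _ = (1:ℝ)^k * ((2:ℝ) ^ (-(2*(k:ℝ) + (ℓ:ℝ) + (N:ℝ)/2 - 1)) /
          ((k.factorial:ℝ) * Real.Gamma ((ℓ:ℝ) + (N:ℝ)/2 + (k:ℝ)))) * x ^ (2*k+ℓ : ℕ) := by
        rw [hxx]; ring

lemma deriv_usj (N ℓ : ℕ) (hN : 2 ≤ N) {t : ℝ} (ht : 0 < t) :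
    deriv (usj N ℓ) t = FF1 N (-1) ℓ t := by
  have hev : usj N ℓ =ᶠ[nhds t] FF N (-1) ℓ :=
    Filter.eventuallyEq_of_mem (Ioi_mem_nhds ht) (fun x hx => usj_eqF N ℓ x hx)
  rw [hev.deriv_eq]
  exact (hasDerivAt_FF N ℓ hN (-1) (by norm_num) t).deriv

lemma deriv_usi (N ℓ : ℕ) (hN : 2 ≤ N) {t : ℝ} (ht : 0 < t) :
    deriv (usi N ℓ) t = FF1 N 1 ℓ t := by
  have hev : usi N ℓ =ᶠ[nhds t] FF N 1 ℓ :=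
    Filter.eventuallyEq_of_mem (Ioi_mem_nhds ht) (fun x hx => usi_eqF N ℓ x hx)
  rw [hev.deriv_eq]
  exact (hasDerivAt_FF N ℓ hN 1 (by norm_num) t).deriv

lemma deriv2_usj (N ℓ : ℕ) (hN : 2 ≤ N) {t : ℝ} (ht : 0 < t) :
    deriv (deriv (usj N ℓ)) t = FF2 N (-1) ℓ t := by
  have hev : deriv (usj N ℓ) =ᶠ[nhds t] FF1 N (-1) ℓ :=
    Filter.eventuallyEq_of_mem (Ioi_mem_nhds ht) (fun x hx => deriv_usj N ℓ hN hx)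
  rw [hev.deriv_eq]
  exact (hasDerivAt_FF1 N ℓ hN (-1) (by norm_num) t).deriv

lemma deriv2_usi (N ℓ : ℕ) (hN : 2 ≤ N) {t : ℝ} (ht : 0 < t) :
    deriv (deriv (usi N ℓ)) t = FF2 N 1 ℓ t := by
  have hev : deriv (usi N ℓ) =ᶠ[nhds t] FF1 N 1 ℓ :=
    Filter.eventuallyEq_of_mem (Ioi_mem_nhds ht) (fun x hx => deriv_usi N ℓ hN hx)
  rw [hev.deriv_eq]
  exact (hasDerivAt_FF1 N ℓ hN 1 (by norm_num) t).deriv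

/-- The determinant of the Navier boundary-condition matrix for the bilaplacian
on the unit ball with phase `ℓ` and Poisson coefficient `σ`:
det M(t) = 2t² j_ℓ(t) i_ℓ(t) - t(N-1)(1-σ)(j_ℓ(t) i_{ℓ+1}(t) + j_{ℓ+1}(t) i_ℓ(t)). -/
theorem navier_det (N : ℕ) (hN : 2 ≤ N) (σ : ℝ) (ℓ : ℕ) (t : ℝ) (ht : 0 < t) :
    Matrix.det !![usj N ℓ t, usi N ℓ t;
      t ^ 2 * deriv (deriv (usj N ℓ)) t + σ * ((N : ℝ) - 1) * t * deriv (usj N ℓ) t,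
      t ^ 2 * deriv (deriv (usi N ℓ)) t + σ * ((N : ℝ) - 1) * t * deriv (usi N ℓ) t] =
      2 * t ^ 2 * usj N ℓ t * usi N ℓ t -
        t * ((N : ℝ) - 1) * (1 - σ) *
          (usj N ℓ t * usi N (ℓ + 1) t + usj N (ℓ + 1) t * usi N ℓ t) := by
  have hJ : usj N ℓ t = FF N (-1) ℓ t := usj_eqF N ℓ t ht
  have hJ1 : usj N (ℓ+1) t = FF N (-1) (ℓ+1) t := usj_eqF N (ℓ+1) t ht
  have hI : usi N ℓ t = FF N 1 ℓ t := usi_eqF N ℓ t ht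
  have hI1 : usi N (ℓ+1) t = FF N 1 (ℓ+1) t := usi_eqF N (ℓ+1) t ht
  have hdj : deriv (usj N ℓ) t
      = (ℓ:ℝ)/t * FF N (-1) ℓ t + (-1) * FF N (-1) (ℓ+1) t := by
    rw [deriv_usj N ℓ hN ht]
    exact FF1_eq N ℓ hN (-1) (by norm_num) t ht
  have hdi : deriv (usi N ℓ) t
      = (ℓ:ℝ)/t * FF N 1 ℓ t + 1 * FF N 1 (ℓ+1) t := by
    rw [deriv_usi N ℓ hN ht]
    exact FF1_eq N ℓ hN 1 (by norm_num) t ht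
  have hddj : t^2 * deriv (deriv (usj N ℓ)) t
      = -((-1)*((N:ℝ)-1)) * t * FF N (-1) (ℓ+1) t
        + ((ℓ:ℝ)^2 - (ℓ:ℝ) + (-1)*t^2) * FF N (-1) ℓ t := by
    rw [deriv2_usj N ℓ hN ht]
    exact FF2_eq N ℓ hN (-1) (by norm_num) t ht
  have hddi : t^2 * deriv (deriv (usi N ℓ)) t
      = -(1*((N:ℝ)-1)) * t * FF N 1 (ℓ+1) t
        + ((ℓ:ℝ)^2 - (ℓ:ℝ) + 1*t^2) * FF N 1 ℓ t := by
    rw [deriv2_usi N ℓ hN ht]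
    exact FF2_eq N ℓ hN 1 (by norm_num) t ht
  rw [Matrix.det_fin_two_of, hJ, hJ1, hI, hI1]
  rw [show t ^ 2 * deriv (deriv (usj N ℓ)) t + σ * ((N : ℝ) - 1) * t * deriv (usj N ℓ) t
      = (t^2 * deriv (deriv (usj N ℓ)) t) + σ * ((N : ℝ) - 1) * t * deriv (usj N ℓ) t by ring,
    hddj, hdj, hddi, hdi]
  field_simp
  ring
end
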